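/- Let P̂⁰ be the q-deformed 9×9 projector (1/(q²+q+1)) times the matrix with nonzero block at rows/columns {3,5,7} given by [[1, √q, q],[√q, q, q√q],[q, q√q, q²]], and define R̂(w) = I₉ + w P̂⁰. Then for any scalars w, w'' with 1 − q²(1+q+q²)⁻² w w'' ≠ 0, setting w' = (w + w'' + ww'')/(1 − q²(1+q+q²)⁻² w w''), one has R̂₁₂(w)R̂₂₃(w')R̂₁₂(w'') = R̂₂₃(w'')R̂₁₂(w')R̂₂₃(w), where R̂₁₂(x) = R̂(x) ⊗ I₃ and R̂₂₃(x) = I₃ ⊗ R̂(x). -/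
import Mathlib


open Matrix

/-- The q-deformed 9×9 projector `P⁰`: 1/(q²+q+1) times the matrix with the
block [[1,√q,q],[√q,q,q√q],[q,q√q,q²]] at rows/columns (3,5,7) (1-indexed). -/
noncomputable def P0 (q : ℝ) : Matrix (Fin 9) (Fin 9) ℝ :=
  (q ^ 2 + q + 1)⁻¹ • Matrix.of (fun i j : Fin 9 =>
    match i.val, j.val with
    | 2, 2 => 1
    | 2, 4 => Real.sqrt q
    | 2, 6 => q
    | 4, 2 => Real.sqrt q
    | 4, 4 => q
    | 4, 6 => q * Real.sqrt q
    | 6, 2 => q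
    | 6, 4 => q * Real.sqrt q
    | 6, 6 => q ^ 2
    | _, _ => 0)

/-- Standard identification giving the 27×27 matrix `A ⊗ I₃`. -/
noncomputable def lift12 (A : Matrix (Fin 9) (Fin 9) ℝ) : Matrix (Fin 27) (Fin 27) ℝ :=
  Matrix.reindex (finProdFinEquiv.trans (finCongr (by norm_num)))
    (finProdFinEquiv.trans (finCongr (by norm_num)))
    (Matrix.kroneckerMap (· * ·) A (1 : Matrix (Fin 3) (Fin 3) ℝ))

/-- Standard identification giving the 27×27 matrix `I₃ ⊗ A`. -/
noncomputable def lift23 (A : Matrix (Fin 9) (Fin 9) ℝ) : Matrix (Fin 27) (Fin 27) ℝ :=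
  Matrix.reindex (finProdFinEquiv.trans (finCongr (by norm_num)))
    (finProdFinEquiv.trans (finCongr (by norm_num)))
    (Matrix.kroneckerMap (· * ·) (1 : Matrix (Fin 3) (Fin 3) ℝ) A)

/-- `R̂(w) = I₉ + w P⁰`. -/
noncomputable def Rw (q w : ℝ) : Matrix (Fin 9) (Fin 9) ℝ := 1 + w • P0 q

/-! ### Auxiliary definitions -/

/-- The vector whose outer square is the unnormalised projector, as a function on `ℕ`. -/
noncomputable def vvn (q : ℝ) : ℕ → ℝ := fun p =>
  if p = 2 then 1 else if p = 4 then Real.sqrt q else if p = 6 then q else 0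

/-- The vector whose outer square is the unnormalised projector. -/
noncomputable def vv (q : ℝ) : Fin 9 → ℝ := fun p => vvn q p.val

/-- Rank-one components of `lift12` of the unnormalised projector. -/
noncomputable def xx (q : ℝ) (a : Fin 3) : Fin 27 → ℝ := fun k =>
  vvn q (k.val / 3) * (if k.val % 3 = a.val then 1 else 0)

/-- Rank-one components of `lift23` of the unnormalised projector. -/
noncomputable def yy (q : ℝ) (c : Fin 3) : Fin 27 → ℝ := fun k =>
  (if k.val / 9 = c.val then 1 else 0) * vvn q (k.val % 9)

lemma vmv_mul {n : Type*} [Fintype n] (u w r t : n → ℝ) :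
    vecMulVec u w * vecMulVec r t = (w ⬝ᵥ r) • vecMulVec u t := by
  ext i j
  simp only [Matrix.mul_apply, vecMulVec_apply, Matrix.smul_apply, smul_eq_mul,
    dotProduct, Finset.sum_mul]
  apply Finset.sum_congr rfl
  intros; ring

lemma hEq (h : 9*3 = 27) : ∀ k : Fin 27, (finProdFinEquiv.trans (finCongr h)).symm k
    = (⟨k.val / 3, by omega⟩, ⟨k.val % 3, by omega⟩) := by
  have : ∀ k : Fin 27, (finProdFinEquiv.trans (finCongr (by norm_num : 9*3 = 27))).symm k
      = ((⟨k.val / 3, by omega⟩, ⟨k.val % 3, by omega⟩) : Fin 9 × Fin 3) := by decide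
  exact this

lemma hFq (h : 3*9 = 27) : ∀ k : Fin 27, (finProdFinEquiv.trans (finCongr h)).symm k
    = (⟨k.val / 9, by omega⟩, ⟨k.val % 9, by omega⟩) := by
  have : ∀ k : Fin 27, (finProdFinEquiv.trans (finCongr (by norm_num : 3*9 = 27))).symm k
      = ((⟨k.val / 9, by omega⟩, ⟨k.val % 9, by omega⟩) : Fin 3 × Fin 9) := by decide
  exact this

lemma lift12_mul (A B : Matrix (Fin 9) (Fin 9) ℝ) :
    lift12 A * lift12 B = lift12 (A * B) := by
  simp only [lift12, reindex_apply, submatrix_mul_equiv, ← Matrix.mul_kronecker_mul, one_mul]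

lemma lift23_mul (A B : Matrix (Fin 9) (Fin 9) ℝ) :
    lift23 A * lift23 B = lift23 (A * B) := by
  simp only [lift23, reindex_apply, submatrix_mul_equiv, ← Matrix.mul_kronecker_mul, one_mul]

lemma lift12_smul (r : ℝ) (A : Matrix (Fin 9) (Fin 9) ℝ) :
    lift12 (r • A) = r • lift12 A := by
  simp only [lift12, Matrix.smul_kronecker]
  ext i j
  simp

lemma lift23_smul (r : ℝ) (A : Matrix (Fin 9) (Fin 9) ℝ) :
    lift23 (r • A) = r • lift23 A := by
  simp only [lift23, Matrix.kronecker_smul]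
  ext i j
  simp

lemma lift12_add (A B : Matrix (Fin 9) (Fin 9) ℝ) :
    lift12 (A + B) = lift12 A + lift12 B := by
  simp only [lift12, Matrix.add_kronecker]
  ext i j
  simp

lemma lift23_add (A B : Matrix (Fin 9) (Fin 9) ℝ) :
    lift23 (A + B) = lift23 A + lift23 B := by
  simp only [lift23, Matrix.kronecker_add]
  ext i j
  simp

lemma lift12_one : lift12 1 = 1 := by
  simp only [lift12, Matrix.one_kronecker_one, reindex_apply, submatrix_one_equiv]

lemma lift23_one : lift23 1 = 1 := by
  simp only [lift23, Matrix.one_kronecker_one, reindex_apply, submatrix_one_equiv]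

set_option maxHeartbeats 1000000 in
lemma dot_vv (q : ℝ) (hq : 0 ≤ q) : vv q ⬝ᵥ vv q = q^2 + q + 1 := by
  have h : vv q ⬝ᵥ vv q = ∑ m ∈ Finset.range 9, vvn q m * vvn q m :=
    Fin.sum_univ_eq_sum_range (fun m => vvn q m * vvn q m) 9
  rw [h]
  norm_num [Finset.sum_range_succ, vvn, Real.mul_self_sqrt hq]
  ring

set_option maxHeartbeats 2000000 in
lemma dot_xy (q : ℝ) (hq : 0 ≤ q) (a c : Fin 3) :
    xx q a ⬝ᵥ yy q c = if a = c then q else 0 := by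
  obtain ⟨av, ha⟩ := a; obtain ⟨cv, hc⟩ := c
  have h : xx q ⟨av,ha⟩ ⬝ᵥ yy q ⟨cv,hc⟩ = ∑ m ∈ Finset.range 27,
      (vvn q (m / 3) * (if m % 3 = av then 1 else 0) *
        ((if m / 9 = cv then 1 else 0) * vvn q (m % 9))) :=
    Fin.sum_univ_eq_sum_range (fun m => vvn q (m / 3) * (if m % 3 = av then 1 else 0) *
        ((if m / 9 = cv then 1 else 0) * vvn q (m % 9))) 27
  rw [h]
  simp only [Fin.mk.injEq]
  interval_cases av <;> interval_cases cv <;>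
    norm_num [Finset.sum_range_succ, vvn, Real.mul_self_sqrt hq]

set_option maxHeartbeats 4000000 in
lemma P0_eq (q : ℝ) (hq : 0 ≤ q) :
    P0 q = (q ^ 2 + q + 1)⁻¹ • vecMulVec (vv q) (vv q) := by
  unfold P0
  congr 1
  ext i j
  obtain ⟨iv, hi⟩ := i; obtain ⟨jv, hj⟩ := j
  simp only [Matrix.of_apply, vecMulVec_apply, vv, vvn]
  interval_cases iv <;> interval_cases jv <;>
    norm_num [Real.mul_self_sqrt hq] <;> ring

lemma lift12_vmv (q : ℝ) :
    lift12 (vecMulVec (vv q) (vv q)) = ∑ a : Fin 3, vecMulVec (xx q a) (xx q a) := by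
  ext k l
  simp only [lift12, reindex_apply, submatrix_apply, hEq, kroneckerMap_apply,
    vecMulVec_apply, Matrix.sum_apply, one_apply, Fin.mk.injEq]
  simp only [vv, vvn, xx, Fin.sum_univ_three]
  have hk : k.val % 3 = 0 ∨ k.val % 3 = 1 ∨ k.val % 3 = 2 := by omega
  have hl : l.val % 3 = 0 ∨ l.val % 3 = 1 ∨ l.val % 3 = 2 := by omega
  rcases hk with hk | hk | hk <;> rcases hl with hl | hl | hl <;> simp [hk, hl]

lemma lift23_vmv (q : ℝ) :
    lift23 (vecMulVec (vv q) (vv q)) = ∑ c : Fin 3, vecMulVec (yy q c) (yy q c) := by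
  ext k l
  simp only [lift23, reindex_apply, submatrix_apply, hFq, kroneckerMap_apply,
    vecMulVec_apply, Matrix.sum_apply, one_apply, Fin.mk.injEq]
  simp only [vv, vvn, yy, Fin.sum_univ_three]
  have hk : k.val / 9 = 0 ∨ k.val / 9 = 1 ∨ k.val / 9 = 2 := by omega
  have hl : l.val / 9 = 0 ∨ l.val / 9 = 1 ∨ l.val / 9 = 2 := by omega
  rcases hk with hk | hk | hk <;> rcases hl with hl | hl | hl <;> simp [hk, hl]

lemma dot_yx (q : ℝ) (hq : 0 ≤ q) (c b : Fin 3) :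
    yy q c ⬝ᵥ xx q b = if b = c then q else 0 := by
  rw [dotProduct_comm]; exact dot_xy q hq b c

theorem stmt_12 (q : ℝ) (hq : 0 < q) (w w'' : ℝ)
    (hden : 1 - q ^ 2 * ((1 + q + q ^ 2)⁻¹) ^ 2 * w * w'' ≠ 0)
    (w' : ℝ)
    (hw' : w' = (w + w'' + w * w'') / (1 - q ^ 2 * ((1 + q + q ^ 2)⁻¹) ^ 2 * w * w'')) :
    lift12 (Rw q w) * lift23 (Rw q w') * lift12 (Rw q w'') =
      lift23 (Rw q w'') * lift12 (Rw q w') * lift23 (Rw q w) := by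
  have hq' : (0:ℝ) ≤ q := hq.le
  set V : Matrix (Fin 9) (Fin 9) ℝ := vecMulVec (vv q) (vv q) with hV
  set X : Matrix (Fin 27) (Fin 27) ℝ := lift12 V with hX
  set Y : Matrix (Fin 27) (Fin 27) ℝ := lift23 V with hY
  have hN0 : (q ^ 2 + q + 1) ≠ 0 := by positivity
  have hN0' : (1 + q + q ^ 2) ≠ 0 := by positivity
  -- expression of the lifted R-matrices
  have hR12 : ∀ u : ℝ, lift12 (Rw q u) = 1 + (u * (q ^ 2 + q + 1)⁻¹) • X := by
    intro u
    rw [Rw, P0_eq q hq', lift12_add, lift12_one, smul_smul, lift12_smul]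
  have hR23 : ∀ u : ℝ, lift23 (Rw q u) = 1 + (u * (q ^ 2 + q + 1)⁻¹) • Y := by
    intro u
    rw [Rw, P0_eq q hq', lift23_add, lift23_one, smul_smul, lift23_smul]
  -- algebraic relations
  have hXX : X * X = (q ^ 2 + q + 1) • X := by
    rw [hX, lift12_mul, hV, vmv_mul, dot_vv q hq', lift12_smul]
  have hYY : Y * Y = (q ^ 2 + q + 1) • Y := by
    rw [hY, lift23_mul, hV, vmv_mul, dot_vv q hq', lift23_smul]
  have hXYX : X * Y * X = (q ^ 2) • X := by
    rw [hX, hY, hV, lift12_vmv, lift23_vmv]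
    simp only [Fin.sum_univ_three, add_mul, mul_add, vmv_mul, smul_mul_assoc,
      dot_xy q hq', dot_yx q hq', smul_smul]
    norm_num [Fin.ext_iff]
    module
  have hYXY : Y * X * Y = (q ^ 2) • Y := by
    rw [hX, hY, hV, lift12_vmv, lift23_vmv]
    simp only [Fin.sum_univ_three, add_mul, mul_add, vmv_mul, smul_mul_assoc,
      dot_xy q hq', dot_yx q hq', smul_smul]
    norm_num [Fin.ext_iff]
    module
  -- the scalar identity
  have h1 : w' * ((1 + q + q ^ 2) ^ 2 - q ^ 2 * w * w'') = (w + w'' + w * w'') * (1 + q + q ^ 2) ^ 2 := by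
    have h0 : w' * (1 - q ^ 2 * ((1 + q + q ^ 2)⁻¹) ^ 2 * w * w'') = w + w'' + w * w'' := by
      rw [hw', div_mul_cancel₀ _ hden]
    field_simp at h0
    linear_combination h0
  rw [hR12 w, hR12 w', hR12 w'', hR23 w, hR23 w', hR23 w'']
  simp only [mul_add, add_mul, mul_one, one_mul, smul_mul_assoc, mul_smul_comm, smul_smul]
  rw [hXX, hYY, hXYX, hYXY]
  simp only [smul_smul]
  have ht : (q ^ 2 + q + 1) * (q ^ 2 + q + 1)⁻¹ = 1 := mul_inv_cancel₀ hN0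
  have hc : ((1 : ℝ) + q + q ^ 2) = q ^ 2 + q + 1 := by ring
  have h0 : w' * (1 - q ^ 2 * ((q ^ 2 + q + 1)⁻¹) ^ 2 * w * w'') = w + w'' + w * w'' := by
    rw [← hc, hw', div_mul_cancel₀ _ hden]
  match_scalars
  · ring
  · linear_combination -((q ^ 2 + q + 1)⁻¹ * h0) + (q ^ 2 + q + 1)⁻¹ * w * w'' * ht
  · linear_combination (q ^ 2 + q + 1)⁻¹ * h0 - (q ^ 2 + q + 1)⁻¹ * w * w'' * ht
  · ring
  · ring
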